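/- For x → ∞: Σ_{n ≤ x} σ̃_1(n) = (2/3) x^{3/2} + O(x log x), where σ̃_1(n) = Σ_{d ∣ n, d² ≤ n} d. -/

import Mathlib

open Filter Finset

private lemma sum_ddm1 (K : ℕ) :
    ∑ d ∈ Icc 1 K, (d:ℝ) * ((d:ℝ) - 1) = ((K:ℝ)^3 - K)/3 := by
  induction K with
  | zero => simp
  | succ n ih =>
    rw [Finset.sum_Icc_succ_top (by omega), ih]
    push_cast; ring

private lemma card_mult (N d : ℕ) (hd : 1 ≤ d) :
    ((Icc 1 N).filter (fun n => d ∣ n ∧ d^2 ≤ n)).card = N / d - (d - 1) := by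
  have h0 : 0 < d := hd
  have : ((Icc 1 N).filter (fun n => d ∣ n ∧ d^2 ≤ n)).card = (Icc d (N/d)).card := by
    apply Finset.card_nbij' (fun n => n / d) (fun m => d * m)
    · intro n hn
      simp only [Finset.mem_coe, mem_filter, mem_Icc] at hn ⊢
      obtain ⟨⟨h1, h2⟩, hdvd, hsq⟩ := hn
      constructor
      · have : d^2 / d ≤ n / d := Nat.div_le_div_right hsq
        simpa [pow_two, Nat.mul_div_cancel_left _ h0] using this
      · exact Nat.div_le_div_right h2
    · intro m hm
      simp only [Finset.mem_coe, mem_Icc] at hm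
      obtain ⟨h1, h2⟩ := hm
      simp only [Finset.mem_coe, mem_filter, mem_Icc]
      refine ⟨⟨Nat.mul_pos h0 (by omega), ?_⟩, ⟨m, rfl⟩,
        by rw [pow_two]; exact Nat.mul_le_mul_left d h1⟩
      calc d * m ≤ d * (N/d) := Nat.mul_le_mul_left _ h2
        _ ≤ N := Nat.mul_div_le N d
    · intro n hn
      simp only [Finset.mem_coe, mem_filter] at hn
      exact Nat.mul_div_cancel' hn.2.1
    · intro m _
      exact Nat.mul_div_cancel_left _ h0
  rw [this, Nat.card_Icc]
  omega

private lemma step1 (N : ℕ) :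
    (∑ n ∈ Icc 1 N, ∑ d ∈ n.divisors.filter (fun d => d ^ 2 ≤ n), (d : ℝ))
      = ∑ d ∈ Icc 1 (Nat.sqrt N), (d:ℝ) * ((N / d - (d - 1) : ℕ) : ℝ) := by
  have h1 : ∀ n ∈ Icc 1 N, ∑ d ∈ n.divisors.filter (fun d => d ^ 2 ≤ n), (d : ℝ)
      = ∑ d ∈ Icc 1 N, if d ∣ n ∧ d^2 ≤ n then (d:ℝ) else 0 := by
    intro n hn
    simp only [mem_Icc] at hn
    rw [← Finset.sum_filter]
    congr 1
    ext d
    simp only [mem_filter, Nat.mem_divisors, mem_Icc]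
    constructor
    · rintro ⟨⟨hdvd, hne⟩, hsq⟩
      exact ⟨⟨Nat.pos_of_dvd_of_pos hdvd hn.1, le_trans (Nat.le_of_dvd hn.1 hdvd) hn.2⟩,
        hdvd, hsq⟩
    · rintro ⟨_, hdvd, hsq⟩
      exact ⟨⟨hdvd, by omega⟩, hsq⟩
  rw [Finset.sum_congr rfl h1, Finset.sum_comm]
  have h2 : ∀ d ∈ Icc 1 N, (∑ n ∈ Icc 1 N, if d ∣ n ∧ d^2 ≤ n then (d:ℝ) else 0)
      = (d:ℝ) * ((N / d - (d - 1) : ℕ) : ℝ) := by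
    intro d hd
    simp only [mem_Icc] at hd
    rw [← Finset.sum_filter, Finset.sum_const, card_mult N d hd.1]
    push_cast [nsmul_eq_mul]
    ring
  rw [Finset.sum_congr rfl h2]
  symm
  apply Finset.sum_subset
  · exact Finset.Icc_subset_Icc_right (Nat.sqrt_le_self N)
  · intro d hd hd2
    simp only [mem_Icc] at hd hd2
    have : Nat.sqrt N < d := by omega
    have : ¬ d^2 ≤ N := by
      intro h
      exact absurd (Nat.le_sqrt'.mpr h) (by omega)
    have : N / d ≤ d - 1 := by
      have hdd : N < d ^ 2 := Nat.lt_of_not_le ‹¬ d^2 ≤ N›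
      rw [pow_two] at hdd
      have := (Nat.div_lt_iff_lt_mul (by omega : 0 < d)).mpr hdd
      omega
    simp [Nat.sub_eq_zero_of_le this]

private lemma key (N : ℕ) (hN : 1 ≤ N) :
    |(∑ n ∈ Icc 1 N, ∑ d ∈ n.divisors.filter (fun d => d ^ 2 ≤ n), (d : ℝ))
      - (2/3) * (Real.sqrt N)^3| ≤ 6 * (N:ℝ) := by
  set K := Nat.sqrt N with hKdef
  set r := Real.sqrt N with hrdef
  have hK1 : 1 ≤ K := by
    have : 1 * 1 ≤ N := by omega
    exact Nat.le_sqrt'.mpr (by simpa [pow_two] using this)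
  have hKN : (K:ℝ)^2 ≤ N := by
    exact_mod_cast Nat.sqrt_le' N
  have hr0 : 0 ≤ r := Real.sqrt_nonneg _
  have hr2 : r^2 = N := Real.sq_sqrt (by positivity)
  have hKr : (K:ℝ) ≤ r := by
    nlinarith [hKN, hr2]
  have hrK : r < (K:ℝ) + 1 := by
    have hlt : N < (K+1)^2 := Nat.lt_succ_sqrt' N
    have : (N:ℝ) < ((K:ℝ)+1)^2 := by exact_mod_cast hlt
    nlinarith [hr2]
  have hr1 : 1 ≤ r := by
    rw [hrdef, show (1:ℝ) = Real.sqrt 1 by simp]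
    exact Real.sqrt_le_sqrt (by exact_mod_cast hN)
  -- rewrite the sum
  rw [step1 N]
  -- cast the terms
  have hcast : ∀ d ∈ Icc 1 K, (d:ℝ) * ((N / d - (d - 1) : ℕ) : ℝ)
      = (d:ℝ) * (((N/d : ℕ):ℝ) - ((d:ℝ) - 1)) := by
    intro d hd
    simp only [mem_Icc] at hd
    have hdsq : d^2 ≤ N := Nat.le_sqrt'.mp hd.2
    have hle : d - 1 ≤ N / d := by
      have : d ≤ N / d := (Nat.le_div_iff_mul_le (by omega)).mpr (by nlinarith [pow_two d])
      omega
    rw [Nat.cast_sub hle]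
    have : ((d - 1 : ℕ):ℝ) = (d:ℝ) - 1 := by
      have : 1 ≤ d := hd.1
      push_cast [this]; ring
    rw [this]
  rw [Finset.sum_congr rfl hcast]
  -- upper and lower bounds for the sum
  have hub : ∑ d ∈ Icc 1 K, (d:ℝ) * (((N/d : ℕ):ℝ) - ((d:ℝ) - 1))
      ≤ (K:ℝ) * N - ((K:ℝ)^3 - K)/3 := by
    have : ∀ d ∈ Icc 1 K, (d:ℝ) * (((N/d : ℕ):ℝ) - ((d:ℝ) - 1))
        ≤ (N:ℝ) - (d:ℝ) * ((d:ℝ) - 1) := by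
      intro d hd
      simp only [mem_Icc] at hd
      have hd0 : (0:ℝ) < d := by exact_mod_cast hd.1
      have h1 : ((N/d : ℕ):ℝ) ≤ (N:ℝ)/d := Nat.cast_div_le
      have : (d:ℝ) * ((N:ℝ)/d) = N := by field_simp
      nlinarith
    calc _ ≤ ∑ d ∈ Icc 1 K, ((N:ℝ) - (d:ℝ) * ((d:ℝ) - 1)) := Finset.sum_le_sum this
      _ = (K:ℝ) * N - ((K:ℝ)^3 - K)/3 := by
          rw [Finset.sum_sub_distrib, sum_ddm1, Finset.sum_const, Nat.card_Icc]
          simp only [nsmul_eq_mul]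
          push_cast [Nat.add_sub_cancel]
          ring
  have hlb : (K:ℝ) * N - (K:ℝ)^2 - ((K:ℝ)^3 - K)/3
      ≤ ∑ d ∈ Icc 1 K, (d:ℝ) * (((N/d : ℕ):ℝ) - ((d:ℝ) - 1)) := by
    have hterm : ∀ d ∈ Icc 1 K, (N:ℝ) - (d:ℝ) - (d:ℝ) * ((d:ℝ) - 1)
        ≤ (d:ℝ) * (((N/d : ℕ):ℝ) - ((d:ℝ) - 1)) := by
      intro d hd
      simp only [mem_Icc] at hd
      have hd0 : (0:ℝ) < d := by exact_mod_cast hd.1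
      have hdam := Nat.div_add_mod N d
      have hmlt : N % d < d := Nat.mod_lt _ (by omega)
      have h1 : (N:ℝ) - d ≤ (d:ℝ) * ((N/d : ℕ):ℝ) := by
        have : (d:ℝ) * ((N/d : ℕ):ℝ) + ((N % d : ℕ):ℝ) = N := by exact_mod_cast hdam
        have : ((N % d : ℕ):ℝ) < d := by exact_mod_cast hmlt
        linarith [show (d:ℝ) * ((N/d : ℕ):ℝ) + ((N % d : ℕ):ℝ) = N by exact_mod_cast hdam]
      nlinarith
    calc (K:ℝ) * N - (K:ℝ)^2 - ((K:ℝ)^3 - K)/3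
        ≤ ∑ d ∈ Icc 1 K, ((N:ℝ) - (d:ℝ) - (d:ℝ) * ((d:ℝ) - 1)) := by
          have hsd : ∑ d ∈ Icc 1 K, (d:ℝ) ≤ (K:ℝ)^2 := by
            have := Finset.sum_le_card_nsmul (Icc 1 K) (fun d => (d:ℝ)) (K:ℝ)
              (by intro y hy; simp only [mem_Icc] at hy; exact Nat.cast_le.mpr hy.2)
            rw [Nat.card_Icc, nsmul_eq_mul] at this
            have h2 : ((K + 1 - 1 : ℕ):ℝ) = (K:ℝ) := by push_cast [Nat.add_sub_cancel]; ring
            calc ∑ d ∈ Icc 1 K, (d:ℝ) ≤ ((K + 1 - 1 : ℕ):ℝ) * K := this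
              _ = (K:ℝ)^2 := by rw [h2]; ring
          have heq : ∑ d ∈ Icc 1 K, ((N:ℝ) - (d:ℝ) - (d:ℝ) * ((d:ℝ) - 1))
              = (K:ℝ) * N - (∑ d ∈ Icc 1 K, (d:ℝ)) - ((K:ℝ)^3 - K)/3 := by
            rw [Finset.sum_sub_distrib, Finset.sum_sub_distrib, sum_ddm1,
              Finset.sum_const, Nat.card_Icc]
            simp only [nsmul_eq_mul]
            push_cast [Nat.add_sub_cancel]
            ring
          rw [heq]
          linarith
      _ ≤ _ := Finset.sum_le_sum hterm
  refine abs_le.mpr ⟨?_, ?_⟩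
  · -- lower:  -(6N) ≤ S - (2/3) r^3
    have hK0 : (0:ℝ) ≤ K := by positivity
    nlinarith [hlb, mul_le_mul_of_nonneg_left hKN hK0,
      pow_le_pow_left₀ hr0 hrK.le 3, hKN, hr2, hr1,
      mul_nonneg hK0 hK0]
  · -- upper: S - (2/3) r^3 ≤ 6N
    nlinarith [hub, mul_nonneg (sq_nonneg (r - (K:ℝ))) (by positivity : (0:ℝ) ≤ 2*r + K),
      hr2, hKr, hr1]

theorem stmt_6 :
    (fun x : ℝ =>
        (∑ n ∈ Finset.Icc 1 ⌊x⌋₊,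
            ∑ d ∈ n.divisors.filter (fun d => d ^ 2 ≤ n), (d : ℝ)) -
          (2 / 3) * x ^ ((3 : ℝ) / 2)) =O[atTop]
      fun x : ℝ => x * Real.log x := by
  rw [Asymptotics.isBigO_iff]
  refine ⟨8 / Real.log 2, ?_⟩
  filter_upwards [eventually_ge_atTop (2:ℝ)] with x hx
  have hx0 : (0:ℝ) ≤ x := by linarith
  have hx1 : (1:ℝ) ≤ x := by linarith
  set N := ⌊x⌋₊ with hNdef
  have hN1 : 1 ≤ N := Nat.le_floor (by exact_mod_cast hx1)
  have hNx : (N:ℝ) ≤ x := Nat.floor_le hx0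
  have hxN : x < (N:ℝ) + 1 := Nat.lt_floor_add_one x
  have hN1' : (1:ℝ) ≤ N := by exact_mod_cast hN1
  -- rpow to sqrt
  have hx32 : x ^ ((3:ℝ)/2) = Real.sqrt x ^ 3 := by
    rw [Real.sqrt_eq_rpow, ← Real.rpow_natCast (x ^ ((1:ℝ)/2)) 3, ← Real.rpow_mul hx0]
    norm_num
  have hkey := key N hN1
  set sx := Real.sqrt x with hsxdef
  set sN := Real.sqrt (N:ℝ) with hsNdef
  have hsx0 : 0 ≤ sx := Real.sqrt_nonneg _
  have hsN0 : 0 ≤ sN := Real.sqrt_nonneg _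
  have hsx2 : sx^2 = x := Real.sq_sqrt hx0
  have hsN2 : sN^2 = (N:ℝ) := Real.sq_sqrt (by positivity)
  have hsN1 : 1 ≤ sN := by nlinarith
  have hmono : sN ≤ sx := Real.sqrt_le_sqrt hNx
  have hsx_le : sx ≤ sN + 1 := by
    have h1 : x ≤ (sN + 1)^2 := by nlinarith
    calc sx ≤ Real.sqrt ((sN + 1)^2) := Real.sqrt_le_sqrt h1
      _ = sN + 1 := Real.sqrt_sq (by linarith)
  have hcube : sx^3 ≤ sN^3 + 3 * N := by
    nlinarith [mul_le_mul hxN.le hsx_le hsx0 (by linarith : (0:ℝ) ≤ (N:ℝ)+1),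
      hsx2, hsN2, hsN1]
  have hcube' : sN^3 ≤ sx^3 := by
    apply pow_le_pow_left₀ hsN0 hmono
  have hbound : |(∑ n ∈ Finset.Icc 1 N,
      ∑ d ∈ n.divisors.filter (fun d => d ^ 2 ≤ n), (d : ℝ)) - (2/3) * x ^ ((3:ℝ)/2)| ≤ 8 * x := by
    rw [hx32]
    have hkey1 := (abs_le.mp hkey).1
    have hkey2 := (abs_le.mp hkey).2
    refine abs_le.mpr ⟨?_, ?_⟩
    · nlinarith [hkey1, hcube, hNx]
    · nlinarith [hkey2, hcube', hNx]
  have hlog2 : 0 < Real.log 2 := Real.log_pos (by norm_num)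
  have hlogx : Real.log 2 ≤ Real.log x := Real.log_le_log (by norm_num) hx
  rw [Real.norm_eq_abs, Real.norm_eq_abs]
  have hxlog : |x * Real.log x| = x * Real.log x :=
    abs_of_nonneg (mul_nonneg hx0 (le_trans hlog2.le hlogx))
  rw [hxlog]
  calc |(∑ n ∈ Finset.Icc 1 N,
      ∑ d ∈ n.divisors.filter (fun d => d ^ 2 ≤ n), (d : ℝ)) - 2/3 * x ^ ((3:ℝ)/2)|
      ≤ 8 * x := by convert hbound using 3
    _ = (8 / Real.log 2) * (x * Real.log 2) := by field_simp
    _ ≤ (8 / Real.log 2) * (x * Real.log x) := by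
        apply mul_le_mul_of_nonneg_left _ (by positivity)
        apply mul_le_mul_of_nonneg_left hlogx hx0
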